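/- Assume α > 2θ ≥ 0, δ ≥ 0, and let λ± (ξ) = (|ξ|^{2θ}/(2(1+|ξ|^{2δ}))) ( -1 ± √(1 - 4|ξ|^{2(α-2θ)}(1+|ξ|^{2δ})) ). Then there exist constants c₁, c₂, C₁, C₂ > 0 and ρ ∈ (0,1] such that for all 0 < |ξ| ≤ ρ: c₁ |ξ|^{2(α-θ)} ≤ -λ₊(ξ) ≤ C₁ |ξ|^{2(α-θ)} and c₂ |ξ|^{2θ} ≤ -λ₋(ξ) ≤ C₂ |ξ|^{2θ}. -/
import Mathlib

open Real

lemma key_aux (α θ δ r : ℝ) (hθ : 0 ≤ θ) (hα : 2 * θ < α) (hδ : 0 ≤ δ)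
    (hr : 0 < r) (hr1 : r ≤ 1) (hre : r ^ (2 * (α - 2 * θ)) ≤ 1 / 8) :
    let D := 1 - 4 * r ^ (2 * (α - 2 * θ)) * (1 + r ^ (2 * δ))
    let lp := r ^ (2 * θ) / (2 * (1 + r ^ (2 * δ))) * (-1 + Real.sqrt D)
    let lm := r ^ (2 * θ) / (2 * (1 + r ^ (2 * δ))) * (-1 - Real.sqrt D)
    (1 * r ^ (2 * (α - θ)) ≤ -lp ∧ -lp ≤ 2 * r ^ (2 * (α - θ))) ∧
    ((1/4) * r ^ (2 * θ) ≤ -lm ∧ -lm ≤ 1 * r ^ (2 * θ)) := by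
  intro D lp lm
  set s := r ^ (2 * δ) with hs
  set t := r ^ (2 * (α - 2 * θ)) with ht
  set q := r ^ (2 * θ) with hq
  set p := r ^ (2 * (α - θ)) with hp
  have hs0 : 0 < s := Real.rpow_pos_of_pos hr _
  have hs1 : s ≤ 1 := Real.rpow_le_one hr.le hr1 (by positivity)
  have ht0 : 0 < t := Real.rpow_pos_of_pos hr _
  have hq0 : 0 < q := Real.rpow_pos_of_pos hr _
  have hp0 : 0 < p := Real.rpow_pos_of_pos hr _
  have hqt : q * t = p := by
    rw [hq, ht, hp, ← Real.rpow_add hr]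
    ring_nf
  have hD0 : 0 ≤ D := by
    have : 4 * t * (1 + s) ≤ 1 := by nlinarith
    simp only [D]; linarith
  have hD1 : D ≤ 1 := by
    have : 0 < 4 * t * (1 + s) := by positivity
    simp only [D]; linarith
  set sD := Real.sqrt D with hsD
  have h1 : 0 ≤ sD := Real.sqrt_nonneg _
  have h2 : sD ≤ 1 := Real.sqrt_le_one.mpr hD1
  have hsq : sD ^ 2 = D := Real.sq_sqrt hD0
  have hDdef : D = 1 - 4 * t * (1 + s) := rfl
  have h2s : (0:ℝ) < 2 * (1 + s) := by linarith
  have hlp : -lp = q * (1 - sD) / (2 * (1 + s)) := by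
    simp only [lp]; field_simp; ring
  have hlm : -lm = q * (1 + sD) / (2 * (1 + s)) := by
    simp only [lm]; field_simp; ring
  have hkey : q * (1 - sD) * (1 + sD) = 4 * p * (1 + s) := by
    have : q * (1 - sD) * (1 + sD) = q * (1 - sD ^ 2) := by ring
    rw [this, hsq, hDdef]; nlinarith [hqt]
  have h1s' : (0:ℝ) ≤ 1 - sD := by linarith
  clear_value lp lm D sD s t q p
  clear hs ht hq hp hsD hDdef hr hr1 hre hθ hα hδ
  constructor
  · constructor
    · rw [hlp, le_div_iff₀ h2s]
      nlinarith [hkey, mul_nonneg (mul_nonneg hq0.le h1s') h1s']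
    · rw [hlp, div_le_iff₀ h2s]
      nlinarith [hkey, mul_nonneg (mul_nonneg hq0.le h1s') h1]
  · constructor
    · rw [hlm, le_div_iff₀ h2s]
      nlinarith [mul_nonneg hq0.le h1, mul_le_mul_of_nonneg_left hs1 hq0.le]
    · rw [hlm, div_le_iff₀ h2s]
      nlinarith [mul_le_mul_of_nonneg_left h2 hq0.le, mul_nonneg hq0.le hs0.le]

theorem stmt_8 (n : ℕ) (α θ δ : ℝ) (hθ : 0 ≤ θ) (hα : 2 * θ < α) (hδ : 0 ≤ δ) :
    ∃ c₁ > (0:ℝ), ∃ c₂ > (0:ℝ), ∃ C₁ > (0:ℝ), ∃ C₂ > (0:ℝ), ∃ ρ ∈ Set.Ioc (0:ℝ) 1,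
      ∀ ξ : EuclideanSpace ℝ (Fin n), 0 < ‖ξ‖ → ‖ξ‖ ≤ ρ →
        let r := ‖ξ‖
        let D := 1 - 4 * r ^ (2 * (α - 2 * θ)) * (1 + r ^ (2 * δ))
        let lp := r ^ (2 * θ) / (2 * (1 + r ^ (2 * δ))) * (-1 + Real.sqrt D)
        let lm := r ^ (2 * θ) / (2 * (1 + r ^ (2 * δ))) * (-1 - Real.sqrt D)
        (c₁ * r ^ (2 * (α - θ)) ≤ -lp ∧ -lp ≤ C₁ * r ^ (2 * (α - θ))) ∧
        (c₂ * r ^ (2 * θ) ≤ -lm ∧ -lm ≤ C₂ * r ^ (2 * θ)) := by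
  set e := 2 * (α - 2 * θ) with he_def
  have he : 0 < e := by simp only [he_def]; linarith
  refine ⟨1, one_pos, 1/4, by norm_num, 2, by norm_num, 1, one_pos,
    min 1 ((1/8 : ℝ) ^ (1/e)), ⟨lt_min one_pos (Real.rpow_pos_of_pos (by norm_num) _),
      min_le_left _ _⟩, ?_⟩
  intro ξ hr hrρ
  have hr1 : ‖ξ‖ ≤ 1 := hrρ.trans (min_le_left _ _)
  have hre : ‖ξ‖ ^ e ≤ 1 / 8 := by
    calc ‖ξ‖ ^ e ≤ ((1/8 : ℝ) ^ (1/e)) ^ e :=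
          Real.rpow_le_rpow hr.le (hrρ.trans (min_le_right _ _)) he.le
      _ = 1 / 8 := by
          rw [← Real.rpow_mul (by norm_num), one_div_mul_cancel he.ne', Real.rpow_one]
  exact key_aux α θ δ ‖ξ‖ hθ hα hδ hr hr1 hre
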